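/- Let (S,+) be a commutative semigroup, let F be a finite nonempty subset of S, and let r be a positive integer. Then there exists a finite subset A of S such that for any r-coloring of A there exists a monochromatic homothetic copy of F contained in A, i.e., there are a ∈ S and n ∈ ℕ with a + n·F ⊆ A and a + n·F monochromatic. -/
import Mathlib


/-- `pnsmul n x` is the sum of `x` with itself `n` times, for a positive integer `n`,
in an additive semigroup. -/
def pnsmul {S : Type*} [AddSemigroup S] (n : ℕ+) (x : S) : S :=
  Nat.rec (motive := fun _ => S) x (fun _ y => y + x) n.natPred

namespace Stmt4Aux

variable {S : Type*} [AddCommSemigroup S]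

/-- Embedding of `S` into the monoid obtained by adjoining an identity. -/
def e (s : S) : Additive (WithOne (Multiplicative S)) :=
  Additive.ofMul ((Multiplicative.ofAdd s : Multiplicative S) : WithOne (Multiplicative S))

lemma e_add (x y : S) : e (x + y) = e x + e y := by
  simp [e, ofAdd_add, ← ofMul_mul, ← WithOne.coe_mul]

lemma e_injective : Function.Injective (e (S := S)) := by
  intro x y h
  simpa [e] using h

lemma e_rec (x : S) (m : ℕ) :
    e (Nat.rec (motive := fun _ => S) x (fun _ y => y + x) m) = (m + 1) • e x := by
  induction m with
  | zero => simp
  | succ m ih =>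
    show e (Nat.rec (motive := fun _ => S) x (fun _ y => y + x) m + x) = _
    rw [e_add, ih]
    exact (succ_nsmul (e x) (m + 1)).symm

lemma e_pnsmul (n : ℕ+) (x : S) : e (pnsmul n x) = (n : ℕ) • e x := by
  rw [pnsmul, e_rec, PNat.natPred_add_one]

lemma mem_range (x0 : S) {ι : Type*} (J : Finset ι) (v : ι → S) :
    e x0 + ∑ i ∈ J, e (v i) ∈ Set.range (e (S := S)) := by
  classical
  induction J using Finset.induction with
  | empty => exact ⟨x0, by simp⟩
  | @insert a J h ih =>
    obtain ⟨s, hs⟩ := ih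
    refine ⟨v a + s, ?_⟩
    rw [e_add, hs, Finset.sum_insert h]
    abel

/-- A sum `x0 + ∑ v i` in the semigroup, defined via the embedding. -/
noncomputable def esum (x0 : S) {ι : Type*} (J : Finset ι) (v : ι → S) : S :=
  (mem_range x0 J v).choose

lemma esum_spec (x0 : S) {ι : Type*} (J : Finset ι) (v : ι → S) :
    e (esum x0 J v) = e x0 + ∑ i ∈ J, e (v i) :=
  (mem_range x0 J v).choose_spec

end Stmt4Aux

open Stmt4Aux in
/-- For any finite nonempty `F ⊆ S` and `r ≥ 1` there is a finite `A ⊆ S` such that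
every `r`-coloring of `A` admits a monochromatic homothetic copy `a + n·F ⊆ A` of `F`. -/
theorem stmt4 {S : Type*} [AddCommSemigroup S] (F : Finset S) (hF : F.Nonempty)
    (r : ℕ) (hr : 0 < r) :
    ∃ A : Finset S, ∀ χ : S → Fin r, ∃ a : S, ∃ n : ℕ+, ∃ c : Fin r,
      ∀ x ∈ F, a + pnsmul n x ∈ A ∧ χ (a + pnsmul n x) = c := by
  classical
  obtain ⟨x0, hx0⟩ := hF
  obtain ⟨ι, _inst, hHJ⟩ :=
    Combinatorics.Line.exists_mono_in_high_dimension {x // x ∈ F} (Fin r)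
  set g : (ι → {x // x ∈ F}) → S :=
    fun f => esum x0 Finset.univ (fun i => (f i).val) with hg
  refine ⟨Finset.image g Finset.univ, fun χ => ?_⟩
  obtain ⟨l, c, hl⟩ := hHJ (fun f => χ (g f))
  set I : Finset ι := Finset.univ.filter (fun i => l.idxFun i = none) with hI
  have hIne : I.Nonempty := by
    obtain ⟨i0, hi0⟩ := l.proper
    exact ⟨i0, by simp [hI, hi0]⟩
  set n : ℕ+ := ⟨I.card, Finset.card_pos.mpr hIne⟩ with hn
  set w : ι → S := fun i => ((l.idxFun i).getD ⟨x0, hx0⟩).val with hw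
  set a : S := esum x0 Iᶜ w with ha
  have key : ∀ x : {x // x ∈ F}, g (l x) = a + pnsmul n x.val := by
    intro x
    apply e_injective
    have h1 : ∑ i ∈ I, e ((l x i).val) = (n : ℕ) • e x.val := by
      have : ∀ i ∈ I, e ((l x i).val) = e x.val := by
        intro i hi
        have hnone : l.idxFun i = none := by simpa [hI] using hi
        simp [Combinatorics.Line.coe_apply, hnone]
      rw [Finset.sum_congr rfl this, Finset.sum_const]
      rfl
    have h2 : ∑ i ∈ Iᶜ, e ((l x i).val) = ∑ i ∈ Iᶜ, e (w i) := by
      refine Finset.sum_congr rfl fun i hi => ?_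
      have hne : ¬ l.idxFun i = none := by simpa [hI] using hi
      obtain ⟨y, hy⟩ := Option.ne_none_iff_exists'.mp hne
      simp [Combinatorics.Line.coe_apply, hy, hw]
    calc e (g (l x)) = e x0 + ∑ i ∈ Finset.univ, e ((l x i).val) := esum_spec _ _ _
      _ = e x0 + (∑ i ∈ Iᶜ, e ((l x i).val) + ∑ i ∈ I, e ((l x i).val)) := by
          rw [Finset.sum_compl_add_sum]
      _ = (e x0 + ∑ i ∈ Iᶜ, e (w i)) + (n : ℕ) • e x.val := by
          rw [h1, h2, add_assoc]
      _ = e (a + pnsmul n x.val) := by rw [e_add, e_pnsmul, ha, esum_spec]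
  refine ⟨a, n, c, fun x hx => ?_⟩
  rw [← key ⟨x, hx⟩]
  exact ⟨Finset.mem_image_of_mem g (Finset.mem_univ _), hl ⟨x, hx⟩⟩
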